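/- Let g be a finite-dimensional real Lie algebra and λ ∈ g*. Let c ⊆ g be a subspace with g = g_λ ⊕ c and [g_λ, c] ⊆ c, where g_λ := {v ∈ g : λ([v,w]) = 0 for all w ∈ g}, let q : g → g_λ be the projection with kernel c, for ξ ∈ g_λ* set j(ξ) := λ + ξ∘q, and let η_ξ(w, w') := j(ξ)([w, w']) for w, w' ∈ c. Then the stabilizer g_{j(ξ)} := {v ∈ g : j(ξ)([v, u]) = 0 for all u ∈ g} is contained in g_λ if and only if the skew bilinear form η_ξ on c is nondegenerate. -/

import Mathlib

/-- Let `g` be a finite-dimensional real Lie algebra, `λ ∈ g*`, `g_λ` the coadjoint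
stabilizer of `λ`, `c` an `ad(g_λ)`-invariant complement of `g_λ`, `q : g → g_λ` the
projection with kernel `c`, `j(ξ) := λ + ξ∘q`, and `η_ξ(w,w') := j(ξ)([w,w'])` on `c`.
Then the stabilizer `g_{j(ξ)}` is contained in `g_λ` if and only if `η_ξ` is
nondegenerate on `c`. -/
theorem stabilizer_in_gl_iff_nondegenerate
    {g : Type*} [LieRing g] [LieAlgebra ℝ g] [FiniteDimensional ℝ g]
    (lam : Module.Dual ℝ g)
    (gl c : Submodule ℝ g)
    (hgl : ∀ v : g, v ∈ gl ↔ ∀ w : g, lam ⁅v, w⁆ = 0)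
    (hcompl : IsCompl gl c)
    (hinv : ∀ v ∈ gl, ∀ w ∈ c, ⁅v, w⁆ ∈ c)
    (q : g →ₗ[ℝ] g)
    (hq1 : ∀ v ∈ gl, q v = v) (hq2 : ∀ w ∈ c, q w = 0)
    (ξ : Module.Dual ℝ g)
    (j : Module.Dual ℝ g) (hj : j = lam + ξ ∘ₗ q) :
    (∀ x : g, (∀ u : g, j ⁅x, u⁆ = 0) → x ∈ gl) ↔
      (∀ w ∈ c, (∀ w' ∈ c, j ⁅w, w'⁆ = 0) → w = 0) := by
  subst hj
  -- key: j vanishes on ⁅gl, c⁆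
  have key : ∀ v ∈ gl, ∀ w' ∈ c, (lam + ξ ∘ₗ q) ⁅v, w'⁆ = 0 := by
    intro v hv w' hw'
    have h1 : lam ⁅v, w'⁆ = 0 := (hgl v).mp hv w'
    have h2 : q ⁅v, w'⁆ = 0 := hq2 _ (hinv v hv w' hw')
    simp [h1, h2]
  constructor
  · intro H w hw hnd
    have hmem : w ∈ gl := by
      apply H
      intro u
      obtain ⟨v, hv, w', hw', rfl⟩ := Submodule.mem_sup.mp
        (by rw [hcompl.codisjoint.eq_top]; exact Submodule.mem_top : u ∈ gl ⊔ c)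
      have h1 : (lam + ξ ∘ₗ q) ⁅w, v⁆ = 0 := by
        have : ⁅w, v⁆ = -⁅v, w⁆ := (lie_skew w v).symm
        rw [this, map_neg, key v hv w hw, neg_zero]
      have h2 : (lam + ξ ∘ₗ q) ⁅w, w'⁆ = 0 := hnd w' hw'
      rw [lie_add, map_add, h1, h2, add_zero]
    exact hcompl.disjoint.le_bot ⟨hmem, hw⟩
  · intro H x hx
    obtain ⟨v, hv, w, hw, rfl⟩ := Submodule.mem_sup.mp
      (by rw [hcompl.codisjoint.eq_top]; exact Submodule.mem_top : x ∈ gl ⊔ c)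
    have hw0 : w = 0 := by
      apply H w hw
      intro w' hw'
      have h1 := hx w'
      rw [add_lie, map_add, key v hv w' hw'] at h1
      linarith
    rw [hw0, add_zero]
    exact hv
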